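/- Let (A, 𝒜) be a measurable space with probability measure μ, let τ ≥ 1, γ > 0, κ ≥ 1, β ∈ ℝ, and let f̂ : A → [0,1] be measurable. Let P be the probability measure with density dP/dμ(a) = κτ / (1 + γ·max(0, f̂(a) − β)) (assume κ is such that this density integrates to 1 with respect to μ). Let Q be any probability measure with Q ≪ μ and dQ/dμ ≤ τ μ-almost everywhere. Then for every measurable f : A → [0,1], ∫ f dP − ∫ f dQ ≤ κτ/γ + (γ/4)·∫ (f̂(a) − f(a))² dP(a). -/

import Mathlib

open MeasureTheory ENNReal NNReal

lemma capped_igw_key (τ γ κ s q f fh β : ℝ) (hτ : 1 ≤ τ) (hγ : 0 < γ) (hκ : 1 ≤ κ)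
    (hs0 : 0 ≤ s) (hs : fh - β ≤ s) (hs2 : s = 0 ∨ s = fh - β)
    (hq0 : 0 ≤ q) (hqτ : q ≤ τ) :
    (f - β) * (κ * τ / (1 + γ * s) - q)
      ≤ κ * τ / γ + γ / 4 * (fh - f) ^ 2 * (κ * τ / (1 + γ * s)) := by
  have hd : 0 < 1 + γ * s := by nlinarith
  set p := κ * τ / (1 + γ * s) with hp_def
  have hpd : p * (1 + γ * s) = κ * τ := by rw [hp_def, div_mul_cancel₀ _ hd.ne']
  have hp0 : 0 < p := by
    apply div_pos (by nlinarith) hd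
  rcases le_or_gt β f with hβf | hfβ
  · -- case f ≥ β
    have h1 : f - β ≤ 1 / γ + γ * (fh - f) ^ 2 / 4 + s := by
      have h2 : f - fh ≤ 1 / γ + γ * (fh - f) ^ 2 / 4 := by
        have := sq_nonneg (γ * (fh - f) + 2)
        have hγ' : 0 < 4 * γ := by linarith
        rw [div_add_div _ _ (ne_of_gt hγ) (by norm_num)]
        rw [le_div_iff₀ (by nlinarith)]
        nlinarith
      linarith
    have h3 : (1 / γ + s) * p = κ * τ / γ := by
      rw [hp_def]
      field_simp
    have h4 : (f - β) * (p - q) ≤ (f - β) * p := by nlinarith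
    have h5 : (f - β) * p ≤ (1 / γ + γ * (fh - f) ^ 2 / 4 + s) * p :=
      mul_le_mul_of_nonneg_right h1 hp0.le
    calc (f - β) * (p - q) ≤ (1 / γ + γ * (fh - f) ^ 2 / 4 + s) * p := le_trans h4 h5
      _ = (1 / γ + s) * p + γ / 4 * (fh - f) ^ 2 * p := by ring
      _ = κ * τ / γ + γ / 4 * (fh - f) ^ 2 * p := by rw [h3]
  · -- case f < β
    have hRHS0 : 0 ≤ κ * τ / γ := by positivity
    have hRHS1 : 0 ≤ γ / 4 * (fh - f) ^ 2 * p := by positivity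
    rcases hs2 with h0 | hfhβ
    · -- s = 0: p = κτ ≥ τ ≥ q, f - β < 0
      have hpτ : τ ≤ p := by
        rw [h0] at hpd
        nlinarith
      have : (f - β) * (p - q) ≤ 0 := by
        apply mul_nonpos_of_nonpos_of_nonneg (by linarith)
        linarith
      linarith
    · -- s = fh - β
      have hu : β - f = (fh - f) - s := by rw [hfhβ]; ring
      have h2 : τ - p ≤ γ * s * p := by nlinarith
      have h1 : (f - β) * (p - q) ≤ (β - f) * (τ - p) := by nlinarith
      have h3 : (β - f) * (τ - p) ≤ (β - f) * (γ * s * p) := by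
        apply mul_le_mul_of_nonneg_left h2 (by linarith)
      have h4 : (β - f) * (γ * s * p) ≤ γ / 4 * (fh - f) ^ 2 * p := by
        have hsq := sq_nonneg (fh - f - 2 * s)
        nlinarith [mul_pos hγ hp0]
      linarith

theorem stmt_6 {A : Type*} [MeasurableSpace A]
    (μ : Measure A) [IsProbabilityMeasure μ]
    (τ γ κ β : ℝ) (hτ : 1 ≤ τ) (hγ : 0 < γ) (hκ : 1 ≤ κ)
    (fhat : A → ℝ) (hfhat : Measurable fhat)
    (hfhat01 : ∀ a, fhat a ∈ Set.Icc (0 : ℝ) 1)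
    (P : Measure A)
    (hP : P = μ.withDensity
      (fun a => ENNReal.ofReal (κ * τ / (1 + γ * max 0 (fhat a - β)))))
    (hPprob : IsProbabilityMeasure P)
    (Q : Measure A) [IsProbabilityMeasure Q] (hQμ : Q ≪ μ)
    (hQτ : ∀ᵐ a ∂μ, (Q.rnDeriv μ a).toReal ≤ τ)
    (f : A → ℝ) (hf : Measurable f) (hf01 : ∀ a, f a ∈ Set.Icc (0 : ℝ) 1) :
    ∫ a, f a ∂P - ∫ a, f a ∂Q
      ≤ κ * τ / γ + (γ / 4) * ∫ a, (fhat a - f a) ^ 2 ∂P := by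
  set s : A → ℝ := fun a => max 0 (fhat a - β) with hs_def
  set pd : A → ℝ := fun a => κ * τ / (1 + γ * s a) with hpd_def
  have hs_meas : Measurable s := measurable_const.max (hfhat.sub measurable_const)
  have hs_nonneg : ∀ a, 0 ≤ s a := fun a => le_max_left _ _
  have hd_pos : ∀ a, 0 < 1 + γ * s a := fun a => by nlinarith [hs_nonneg a]
  have hpd_meas : Measurable pd :=
    measurable_const.div ((hs_meas.const_mul γ).const_add 1)
  have hpd_pos : ∀ a, 0 < pd a := fun a => div_pos (by nlinarith) (hd_pos a)
  have hpd_le : ∀ a, pd a ≤ κ * τ := by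
    intro a
    rw [hpd_def, div_le_iff₀ (hd_pos a)]
    have h1 : (0:ℝ) ≤ κ * τ := by nlinarith
    nlinarith [mul_nonneg (mul_nonneg h1 hγ.le) (hs_nonneg a)]
  set qd : A → ℝ := fun a => (Q.rnDeriv μ a).toReal with hqd_def
  have hqd_meas : Measurable qd := (Measure.measurable_rnDeriv Q μ).ennreal_toReal
  have hqd_nonneg : ∀ a, 0 ≤ qd a := fun a => ENNReal.toReal_nonneg
  -- conversion of integrals over P
  have conv : ∀ g : A → ℝ, Measurable g → ∫ a, g a ∂P = ∫ a, pd a * g a ∂μ := by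
    intro g hg
    rw [hP]
    have heq : (fun a => ENNReal.ofReal (κ * τ / (1 + γ * max 0 (fhat a - β))))
        = fun a => ((Real.toNNReal (pd a) : ℝ≥0) : ENNReal) := rfl
    rw [heq, integral_withDensity_eq_integral_smul hpd_meas.real_toNNReal g]
    congr 1
    funext a
    rw [NNReal.smul_def, Real.coe_toNNReal _ (hpd_pos a).le, smul_eq_mul]
  -- conversion of integrals over Q
  have hbddf : ∀ a, |f a| ≤ 1 := by
    intro a
    rw [abs_le]; exact ⟨by linarith [(hf01 a).1], (hf01 a).2⟩
  have hfa_meas : Measurable fun a => (fhat a - f a) ^ 2 := (hfhat.sub hf).pow_const 2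
  have hbdd_sq : ∀ a, (fhat a - f a) ^ 2 ≤ 1 := by
    intro a
    have h1 := (hf01 a).1; have h2 := (hf01 a).2
    have h3 := (hfhat01 a).1; have h4 := (hfhat01 a).2
    nlinarith
  -- integrability lemmas
  have Ibdd : ∀ (g : A → ℝ) (C : ℝ), Measurable g → (∀ᵐ a ∂μ, ‖g a‖ ≤ C) → Integrable g μ := by
    intro g C hg hC
    exact (integrable_const C).mono' hg.aestronglyMeasurable hC
  have I_pd : Integrable pd μ := by
    refine Ibdd pd (κ * τ) hpd_meas (Filter.Eventually.of_forall fun a => ?_)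
    rw [Real.norm_eq_abs, abs_of_pos (hpd_pos a)]; exact hpd_le a
  have I_qd : Integrable qd μ := by
    refine Ibdd qd τ hqd_meas ?_
    filter_upwards [hQτ] with a ha
    rw [Real.norm_eq_abs, abs_of_nonneg (hqd_nonneg a)]; exact ha
  have I_fp : Integrable (fun a => pd a * f a) μ := by
    refine Ibdd _ (κ * τ) (hpd_meas.mul hf) (Filter.Eventually.of_forall fun a => ?_)
    rw [Real.norm_eq_abs, abs_mul, abs_of_pos (hpd_pos a)]
    calc pd a * |f a| ≤ pd a * 1 := by
          exact mul_le_mul_of_nonneg_left (hbddf a) (hpd_pos a).le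
      _ ≤ κ * τ := by rw [mul_one]; exact hpd_le a
  have I_fq : Integrable (fun a => qd a * f a) μ := by
    refine Ibdd _ τ (hqd_meas.mul hf) ?_
    filter_upwards [hQτ] with a ha
    rw [Real.norm_eq_abs, abs_mul, abs_of_nonneg (hqd_nonneg a)]
    calc qd a * |f a| ≤ qd a * 1 := mul_le_mul_of_nonneg_left (hbddf a) (hqd_nonneg a)
      _ ≤ τ := by rw [mul_one]; exact ha
  have I_sq : Integrable (fun a => pd a * (fhat a - f a) ^ 2) μ := by
    refine Ibdd _ (κ * τ) (hpd_meas.mul hfa_meas) (Filter.Eventually.of_forall fun a => ?_)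
    rw [Real.norm_eq_abs, abs_mul, abs_of_pos (hpd_pos a), abs_of_nonneg (sq_nonneg _)]
    calc pd a * (fhat a - f a) ^ 2 ≤ pd a * 1 :=
          mul_le_mul_of_nonneg_left (hbdd_sq a) (hpd_pos a).le
      _ ≤ κ * τ := by rw [mul_one]; exact hpd_le a
  -- total masses
  have hpd1 : ∫ a, pd a ∂μ = 1 := by
    have h := conv (fun _ => (1 : ℝ)) measurable_const
    simp only [integral_const, measureReal_def, measure_univ, ENNReal.toReal_one, one_smul, mul_one] at h
    exact h.symm
  have hqd1 : ∫ a, qd a ∂μ = 1 := by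
    rw [hqd_def]
    rw [Measure.integral_toReal_rnDeriv hQμ]
    simp [measure_univ]
  -- Q integral conversion
  have hQconv : ∫ a, f a ∂Q = ∫ a, qd a * f a ∂μ := by
    rw [← integral_rnDeriv_smul hQμ (f := f)]
    simp only [smul_eq_mul]
    rfl
  -- pointwise inequality
  have hae : ∀ᵐ a ∂μ, (f a - β) * (pd a - qd a)
      ≤ κ * τ / γ + γ / 4 * (fhat a - f a) ^ 2 * pd a := by
    filter_upwards [hQτ] with a ha
    exact capped_igw_key τ γ κ (s a) (qd a) (f a) (fhat a) β hτ hγ hκ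
      (hs_nonneg a) (le_max_right _ _) ((max_choice 0 (fhat a - β)).imp id id)
      (hqd_nonneg a) ha
  -- integrate
  have I_lhs : Integrable (fun a => (f a - β) * (pd a - qd a)) μ := by
    have : (fun a => (f a - β) * (pd a - qd a))
        = fun a => (pd a * f a - qd a * f a) - (β * pd a - β * qd a) := by
      funext a; ring
    rw [this]
    exact ((I_fp.sub I_fq).sub ((I_pd.const_mul β).sub (I_qd.const_mul β)))
  have I_rhs : Integrable (fun a => κ * τ / γ + γ / 4 * (fhat a - f a) ^ 2 * pd a) μ := by
    have : (fun a => κ * τ / γ + γ / 4 * (fhat a - f a) ^ 2 * pd a)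
        = fun a => κ * τ / γ + γ / 4 * (pd a * (fhat a - f a) ^ 2) := by
      funext a; ring
    rw [this]
    exact (integrable_const _).add (I_sq.const_mul _)
  have hint := integral_mono_ae I_lhs I_rhs hae
  -- compute LHS integral
  have hL : ∫ a, (f a - β) * (pd a - qd a) ∂μ = ∫ a, f a ∂P - ∫ a, f a ∂Q := by
    have h1 : (fun a => (f a - β) * (pd a - qd a))
        = fun a => (pd a * f a - qd a * f a) - (β * pd a - β * qd a) := by
      funext a; ring
    have I_fpq : Integrable (fun a => pd a * f a - qd a * f a) μ := I_fp.sub I_fq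
    have I2 : Integrable (fun a => β * pd a - β * qd a) μ :=
      (I_pd.const_mul β).sub (I_qd.const_mul β)
    have I_pq : Integrable (fun a => β * pd a) μ := I_pd.const_mul β
    have I_qq : Integrable (fun a => β * qd a) μ := I_qd.const_mul β
    rw [h1, integral_sub I_fpq I2, integral_sub I_fp I_fq, integral_sub I_pq I_qq,
      integral_const_mul, integral_const_mul, hpd1, hqd1, conv f hf, hQconv]
    ring
  -- compute RHS integral
  have hR : ∫ a, (κ * τ / γ + γ / 4 * (fhat a - f a) ^ 2 * pd a) ∂μ
      = κ * τ / γ + γ / 4 * ∫ a, (fhat a - f a) ^ 2 ∂P := by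
    have h1 : (fun a => κ * τ / γ + γ / 4 * (fhat a - f a) ^ 2 * pd a)
        = fun a => κ * τ / γ + γ / 4 * (pd a * (fhat a - f a) ^ 2) := by
      funext a; ring
    rw [h1, integral_add (integrable_const _) (I_sq.const_mul _), integral_const,
      integral_const_mul, ← conv _ hfa_meas]
    simp [measure_univ]
  rw [hL, hR] at hint
  linarith
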